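/- Let f : ℝⁿ → ℝ be continuously differentiable with L-Lipschitz gradient, let σ > 0, let g be an inexact gradient at x satisfying ‖g − ∇f(x)‖ ≤ ω‖g‖ with 0 < ω ≤ 1/σ, and let s = −(1/σ)g. Then |f(x+s) − (f(x) + ∇f(x)ᵀs)| ≤ (L/2)‖s‖², and the ratio ρ = (f(x) − f(x+s)) / ((1/σ)‖g‖²) satisfies |ρ − 1| ≤ (L/2 + 1)/σ. -/

import Mathlib

open scoped RealInnerProductSpace

lemma descent_aux {n : ℕ} (f : EuclideanSpace ℝ (Fin n) → ℝ)
    (f' : EuclideanSpace ℝ (Fin n) → EuclideanSpace ℝ (Fin n))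
    (L : ℝ) (hL : 0 ≤ L)
    (hf' : ∀ y, HasGradientAt f (f' y) y)
    (hLip : LipschitzWith (Real.toNNReal L) f')
    (x s : EuclideanSpace ℝ (Fin n)) :
    |f (x + s) - (f x + ⟪f' x, s⟫)| ≤ L / 2 * ‖s‖ ^ 2 := by
  have hcont : Continuous f' := hLip.continuous
  have hder : ∀ t : ℝ, HasDerivAt (fun t : ℝ => f (x + t • s))
      ⟪f' (x + t • s), s⟫ t := by
    intro t
    have h1 : HasDerivAt (fun t : ℝ => x + t • s) s t := by
      simpa using ((hasDerivAt_id t).smul_const s).const_add x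
    have h2 := (hf' (x + t • s)).hasFDerivAt.comp_hasDerivAt t h1
    simp at h2
    exact h2
  have hcd : Continuous fun t : ℝ => (⟪f' (x + t • s), s⟫ : ℝ) := by
    exact (continuous_inner.comp (((hcont.comp
      (continuous_const.add (continuous_id.smul continuous_const)))).prodMk continuous_const))
  have hint : IntervalIntegrable (fun t : ℝ => (⟪f' (x + t • s), s⟫ : ℝ))
      MeasureTheory.volume 0 1 := hcd.intervalIntegrable 0 1
  have key : (∫ t in (0:ℝ)..1, (⟪f' (x + t • s), s⟫ : ℝ))
      = f (x + s) - f x := by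
    have := intervalIntegral.integral_eq_sub_of_hasDerivAt
      (f := fun t : ℝ => f (x + t • s)) (fun t _ => hder t) hint
    simpa using this
  have key2 : f (x + s) - (f x + ⟪f' x, s⟫)
      = ∫ t in (0:ℝ)..1, (⟪f' (x + t • s) - f' x, s⟫ : ℝ) := by
    have h3 : (∫ t in (0:ℝ)..1, (⟪f' (x + t • s) - f' x, s⟫ : ℝ))
        = (∫ t in (0:ℝ)..1, (⟪f' (x + t • s), s⟫ : ℝ)) - ∫ t in (0:ℝ)..1, (⟪f' x, s⟫ : ℝ) := by
      rw [← intervalIntegral.integral_sub hint (intervalIntegrable_const)]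
      simp [inner_sub_left]
    rw [h3, key, intervalIntegral.integral_const]
    simp
    ring
  rw [key2]
  have hbound : ∀ t ∈ Set.uIoc (0:ℝ) 1,
      ‖(⟪f' (x + t • s) - f' x, s⟫ : ℝ)‖ ≤ L * ‖s‖ ^ 2 * t := by
    intro t ht
    rw [Set.uIoc_of_le zero_le_one] at ht
    have h4 : ‖f' (x + t • s) - f' x‖ ≤ L * (t * ‖s‖) := by
      have := hLip.dist_le_mul (x + t • s) x
      rw [dist_eq_norm] at this
      simpa [norm_smul, abs_of_pos ht.1, Real.coe_toNNReal L hL] using this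
    calc ‖(⟪f' (x + t • s) - f' x, s⟫ : ℝ)‖ ≤ ‖f' (x + t • s) - f' x‖ * ‖s‖ :=
          norm_inner_le_norm _ _
      _ ≤ L * (t * ‖s‖) * ‖s‖ := by
          apply mul_le_mul_of_nonneg_right h4 (norm_nonneg _)
      _ = L * ‖s‖ ^ 2 * t := by ring
  have hgint : IntervalIntegrable (fun t : ℝ => L * ‖s‖ ^ 2 * t) MeasureTheory.volume 0 1 :=
    ((continuous_const.mul continuous_id).intervalIntegrable 0 1)
  have h5 : ‖∫ t in (0:ℝ)..1, (⟪f' (x + t • s) - f' x, s⟫ : ℝ)‖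
      ≤ |∫ t in (0:ℝ)..1, L * ‖s‖ ^ 2 * t| :=
    intervalIntegral.norm_integral_le_abs_of_norm_le ((MeasureTheory.ae_restrict_iff' measurableSet_uIoc).2 (MeasureTheory.ae_of_all _ hbound)) hgint
  have h6 : (∫ t in (0:ℝ)..1, L * ‖s‖ ^ 2 * t) = L / 2 * ‖s‖ ^ 2 := by
    rw [intervalIntegral.integral_const_mul, integral_id]
    ring
  rw [h6] at h5
  calc |∫ t in (0:ℝ)..1, (⟪f' (x + t • s) - f' x, s⟫ : ℝ)| ≤ |L / 2 * ‖s‖ ^ 2| := h5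
    _ = L / 2 * ‖s‖ ^ 2 := abs_of_nonneg (by positivity)

theorem stmt_0 {n : ℕ} (f : EuclideanSpace ℝ (Fin n) → ℝ)
    (f' : EuclideanSpace ℝ (Fin n) → EuclideanSpace ℝ (Fin n))
    (L σ ω : ℝ) (x g s : EuclideanSpace ℝ (Fin n))
    (hf : ContDiff ℝ 1 f)
    (hf' : ∀ y, HasGradientAt f (f' y) y)
    (hL : 0 < L)
    (hLip : LipschitzWith (Real.toNNReal L) f')
    (hσ : 0 < σ) (hω : 0 < ω) (hωσ : ω ≤ 1 / σ)
    (hg : g ≠ 0)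
    (herr : ‖g - f' x‖ ≤ ω * ‖g‖)
    (hs : s = -(1 / σ) • g) :
    |f (x + s) - (f x + ⟪f' x, s⟫)| ≤ L / 2 * ‖s‖ ^ 2 ∧
      |(f x - f (x + s)) / ((1 / σ) * ‖g‖ ^ 2) - 1| ≤ (L / 2 + 1) / σ := by
  have hE := descent_aux f f' L hL.le hf' hLip x s
  refine ⟨hE, ?_⟩
  have hgn : 0 < ‖g‖ := norm_pos_iff.mpr hg
  have hDpos : 0 < (1 / σ) * ‖g‖ ^ 2 := by positivity
  have hsnorm : ‖s‖ = (1 / σ) * ‖g‖ := by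
    rw [hs, norm_smul, Real.norm_eq_abs, abs_neg,
      abs_of_pos (by positivity : (0:ℝ) < 1 / σ)]
  have hinner : (⟪f' x, s⟫ : ℝ) = -(1 / σ) * ⟪f' x, g⟫ := by
    rw [hs, real_inner_smul_right]
  have herr2 : |(⟪g - f' x, g⟫ : ℝ)| ≤ (1 / σ) * ‖g‖ ^ 2 := by
    calc |(⟪g - f' x, g⟫ : ℝ)| ≤ ‖g - f' x‖ * ‖g‖ := abs_real_inner_le_norm _ _
      _ ≤ (ω * ‖g‖) * ‖g‖ := mul_le_mul_of_nonneg_right herr (norm_nonneg _)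
      _ ≤ ((1 / σ) * ‖g‖) * ‖g‖ := by
          have := mul_le_mul_of_nonneg_right hωσ (norm_nonneg g)
          nlinarith [norm_nonneg g]
      _ = (1 / σ) * ‖g‖ ^ 2 := by ring
  have hexp : (⟪f' x, g⟫ : ℝ) = ‖g‖ ^ 2 - ⟪g - f' x, g⟫ := by
    rw [inner_sub_left, real_inner_self_eq_norm_sq]
    ring
  have key : (f x - f (x + s)) / ((1 / σ) * ‖g‖ ^ 2) - 1
      = (-(f (x + s) - (f x + ⟪f' x, s⟫)) - (1 / σ) * ⟪g - f' x, g⟫)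
        / ((1 / σ) * ‖g‖ ^ 2) := by
    rw [div_sub_one hDpos.ne']
    congr 1
    rw [hinner, hexp]
    ring
  rw [key, abs_div, abs_of_pos hDpos, div_le_iff₀ hDpos]
  have hE2 : |f (x + s) - (f x + ⟪f' x, s⟫)| ≤ L / 2 * ((1 / σ) ^ 2 * ‖g‖ ^ 2) := by
    calc |f (x + s) - (f x + ⟪f' x, s⟫)| ≤ L / 2 * ‖s‖ ^ 2 := hE
      _ = L / 2 * ((1 / σ) ^ 2 * ‖g‖ ^ 2) := by rw [hsnorm]; ring
  calc |-(f (x + s) - (f x + ⟪f' x, s⟫)) - (1 / σ) * ⟪g - f' x, g⟫|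
      ≤ |f (x + s) - (f x + ⟪f' x, s⟫)| + (1 / σ) * |(⟪g - f' x, g⟫ : ℝ)| := by
        rw [← abs_neg (f (x + s) - (f x + ⟪f' x, s⟫))]
        calc _ ≤ |-(f (x + s) - (f x + ⟪f' x, s⟫))| + |(1 / σ) * ⟪g - f' x, g⟫| :=
              abs_sub _ _
          _ = _ := by rw [abs_mul, abs_of_pos (by positivity : (0:ℝ) < 1 / σ)]
    _ ≤ L / 2 * ((1 / σ) ^ 2 * ‖g‖ ^ 2) + (1 / σ) * ((1 / σ) * ‖g‖ ^ 2) := by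
        have := mul_le_mul_of_nonneg_left herr2 (by positivity : (0:ℝ) ≤ 1 / σ)
        linarith
    _ = (L / 2 + 1) / σ * ((1 / σ) * ‖g‖ ^ 2) := by
        field_simp
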